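/- (Dual representation / one-point attainment.) Let φ be a proper closed convex function with φ(1)=0, differentiable on the interior of its domain, and let Q ≪ P be a finite signed measure with φ(Q,P) = ∫ φ(q) dP < ∞ where q := dQ/dP, such that ∫ |φ'(q)| d|Q| < ∞. Then, with f̄ := φ'(q), one has ∫ f̄ dQ − ∫ φ*(f̄) dP = φ(Q,P), and for every measurable f with ∫|f| d|Q| < ∞ one has ∫ f dQ − ∫ φ*(f) dP ≤ φ(Q,P). Hence φ(Q,P) = sup over such f of (∫ f dQ − ∫ φ*(f) dP), attained at f̄. -/

import Mathlib

open MeasureTheory Filter Topology Set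
open scoped ENNReal NNReal Classical

noncomputable section

variable {X : Type*} [MeasurableSpace X]

/-- The φ-divergence ∫ φ(dQ/dP) dP for a signed measure `Q` absolutely continuous w.r.t. `P`. -/
def div (φ : ℝ → ℝ≥0∞) (Q : SignedMeasure X) (P : Measure X) : ℝ≥0∞ :=
  ∫⁻ x, φ (Q.rnDeriv P x) ∂P

/-- The φ-divergence, set to `⊤` when `Q` is not absolutely continuous w.r.t. `P`. -/
def divext (φ : ℝ → ℝ≥0∞) (Q : SignedMeasure X) (P : Measure X) : ℝ≥0∞ :=
  if Q ≪ᵥ P.toENNRealVectorMeasure then div φ Q P else ⊤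

/-- Integral of a real function against a signed measure. -/
def sint (Q : SignedMeasure X) (f : X → ℝ) : ℝ :=
  ∫ x, f x ∂Q.toJordanDecomposition.posPart - ∫ x, f x ∂Q.toJordanDecomposition.negPart

/-- The τ_F topology on signed measures: the coarsest topology making `Q ↦ ∫ f dQ`
continuous for every `f` which is bounded measurable or belongs to `F`. -/
def tauTop (F : Set (X → ℝ)) : TopologicalSpace (SignedMeasure X) :=
  ⨅ f ∈ {f : X → ℝ | Measurable f ∧ ∃ C, ∀ x, |f x| ≤ C} ∪ F,
    TopologicalSpace.induced (fun Q => sint Q f) inferInstance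

/-- Fenchel–Legendre conjugate of an `[0,∞]`-valued function on ℝ. -/
def conjE (φ : ℝ → ℝ≥0∞) (t : ℝ) : EReal :=
  ⨆ x : ℝ, ((t * x : ℝ) : EReal) - ((φ x : ℝ≥0∞) : EReal)

/-- The nonnegative part of an extended real, as an element of `[0,∞]`. -/
def etoE (e : EReal) : ℝ≥0∞ := if e = ⊤ then ⊤ else ENNReal.ofReal e.toReal

/-- Extended-real-valued integral of an `EReal`-valued function. -/
def eint (P : Measure X) (g : X → EReal) : EReal :=
  ((∫⁻ x, etoE (g x) ∂P : ℝ≥0∞) : EReal) - ((∫⁻ x, etoE (-(g x)) ∂P : ℝ≥0∞) : EReal)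


/-! ### Auxiliary lemmas -/

lemma ennE {c : ℝ≥0∞} (hc : c ≠ ⊤) : (c : EReal) = ((c.toReal : ℝ) : EReal) := by
  rw [← EReal.toReal_coe_ennreal (x := c),
    EReal.coe_toReal (by simpa using hc) (by simp)]

lemma conjE_ge (φ : ℝ → ℝ≥0∞) (t x : ℝ) : ((t*x : ℝ):EReal) - (φ x : EReal) ≤ conjE φ t :=
  le_iSup (fun x => ((t*x : ℝ):EReal) - (φ x : EReal)) x

lemma conjE_ge_self (φ : ℝ → ℝ≥0∞) (hone : φ 1 = 0) (t : ℝ) : (t : EReal) ≤ conjE φ t := by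
  have := conjE_ge φ t 1
  simpa [hone] using this

lemma conjE_ne_bot (φ : ℝ → ℝ≥0∞) (hone : φ 1 = 0) (t : ℝ) : conjE φ t ≠ ⊥ :=
  fun h => by simpa [h] using conjE_ge_self φ hone t

lemma etoE_coe (r : ℝ) : etoE (r : EReal) = ENNReal.ofReal r := by
  simp [etoE]

lemma etoE_mono : Monotone etoE := by
  intro a b hab
  rcases eq_or_ne b ⊤ with rb | rb
  · simp [etoE, rb]
  rcases eq_or_ne a ⊥ with ra | ra
  · simp [etoE, ra]
  · have ha : a ≠ ⊤ := fun h => rb (top_le_iff.1 (h ▸ hab))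
    simp only [etoE, if_neg ha, if_neg rb]
    exact ENNReal.ofReal_le_ofReal (EReal.toReal_le_toReal hab ra rb)

lemma measurable_etoE : Measurable etoE := by
  unfold etoE
  exact Measurable.ite (measurableSet_singleton ⊤) measurable_const
    (ENNReal.measurable_ofReal.comp measurable_ereal_toReal)

lemma measurable_conjE (φ : ℝ → ℝ≥0∞) : Measurable (conjE φ) := by
  have : LowerSemicontinuous (conjE φ) := by
    apply lowerSemicontinuous_iSup
    intro x
    rcases eq_or_ne (φ x) ⊤ with hx | hx
    · have : (fun t : ℝ => ((t * x : ℝ) : EReal) - ((φ x : ℝ≥0∞) : EReal)) = fun _ => ⊥ := by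
        funext t; simp [hx]
      rw [this]; exact lowerSemicontinuous_const
    · have : (fun t : ℝ => ((t * x : ℝ) : EReal) - ((φ x : ℝ≥0∞) : EReal)) =
          fun t => ((t * x - (φ x).toReal : ℝ) : EReal) := by
        funext t
        rw [ennE hx, ← EReal.coe_sub]
      rw [this]
      exact (continuous_coe_real_ereal.comp (by continuity)).lowerSemicontinuous
  exact this.measurable

lemma convexS {φ : ℝ → ℝ≥0∞} (hconv : ConvexOn ℝ≥0 Set.univ φ) :
    Convex ℝ {y : ℝ | φ y ≠ ⊤} := by
  intro x hx y hy a b ha hb hab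
  have hab' : a.toNNReal + b.toNNReal = 1 := by
    ext; push_cast; simp [Real.coe_toNNReal _ ha, Real.coe_toNNReal _ hb, hab]
  have h := hconv.2 (Set.mem_univ x) (Set.mem_univ y) (zero_le (a := a.toNNReal)) (zero_le (a := b.toNNReal)) hab'
  simp only [NNReal.smul_def, Real.coe_toNNReal _ ha, Real.coe_toNNReal _ hb, smul_eq_mul] at h
  rw [Set.mem_setOf_eq] at hx hy ⊢
  have hlt : a.toNNReal • φ x + b.toNNReal • φ y < ⊤ := by
    rw [ENNReal.smul_def, ENNReal.smul_def, smul_eq_mul, smul_eq_mul]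
    refine ENNReal.add_lt_top.2 ⟨?_, ?_⟩ <;>
      exact ENNReal.mul_lt_top ENNReal.coe_lt_top (lt_top_iff_ne_top.2 ‹_›)
  have := lt_of_le_of_lt h hlt
  simpa [smul_eq_mul] using this.ne

lemma convex_toReal {φ : ℝ → ℝ≥0∞} (hconv : ConvexOn ℝ≥0 Set.univ φ) :
    ConvexOn ℝ {y : ℝ | φ y ≠ ⊤} (fun y => (φ y).toReal) := by
  refine ⟨convexS hconv, ?_⟩
  intro x hx y hy a b ha hb hab
  have hab' : a.toNNReal + b.toNNReal = 1 := by
    ext; push_cast; simp [Real.coe_toNNReal _ ha, Real.coe_toNNReal _ hb, hab]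
  have h := hconv.2 (Set.mem_univ x) (Set.mem_univ y) (zero_le (a := a.toNNReal)) (zero_le (a := b.toNNReal)) hab'
  simp only [NNReal.smul_def, Real.coe_toNNReal _ ha, Real.coe_toNNReal _ hb, smul_eq_mul] at h
  rw [Set.mem_setOf_eq] at hx hy
  rw [ENNReal.smul_def, ENNReal.smul_def, smul_eq_mul, smul_eq_mul] at h
  have hxt : (a.toNNReal : ℝ≥0∞) * φ x ≠ ⊤ :=
    (ENNReal.mul_lt_top ENNReal.coe_lt_top (lt_top_iff_ne_top.2 hx)).ne
  have hyt : (b.toNNReal : ℝ≥0∞) * φ y ≠ ⊤ :=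
    (ENNReal.mul_lt_top ENNReal.coe_lt_top (lt_top_iff_ne_top.2 hy)).ne
  have h2 : ((φ (a * x + b * y)).toReal : ℝ) ≤
      ((a.toNNReal : ℝ≥0∞) * φ x + (b.toNNReal : ℝ≥0∞) * φ y).toReal :=
    ENNReal.toReal_mono (ENNReal.add_ne_top.2 ⟨hxt, hyt⟩) h
  calc (φ (a • x + b • y)).toReal = (φ (a * x + b * y)).toReal := by norm_num
    _ ≤ _ := h2
    _ = a * (φ x).toReal + b * (φ y).toReal := by
        rw [ENNReal.toReal_add hxt hyt, ENNReal.toReal_mul, ENNReal.toReal_mul]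
        simp [Real.coe_toNNReal _ ha, Real.coe_toNNReal _ hb]
    _ = a • (φ x).toReal + b • (φ y).toReal := by simp [smul_eq_mul]

lemma subgrad_of_hasDerivWithinAt {S : Set ℝ} (hS : Convex ℝ S) {ψ : ℝ → ℝ} (hψ : ConvexOn ℝ S ψ)
    {x d : ℝ} (hx : x ∈ S) (hd : HasDerivWithinAt ψ d S x) {y : ℝ} (hy : y ∈ S) :
    ψ x + d * (y - x) ≤ ψ y := by
  have hmono := hψ.slope_mono hx
  have htend := hasDerivWithinAt_iff_tendsto_slope.1 hd
  rcases lt_trichotomy x y with hxy | rfl | hyx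
  · have hsub : Ioc x y ⊆ S \ {x} := fun z hz =>
      ⟨hS.ordConnected.out hx hy ⟨hz.1.le, hz.2⟩,
        fun hmem => (ne_of_gt hz.1) (Set.mem_singleton_iff.1 hmem)⟩
    have hne : (𝓝[Ioc x y] x).NeBot := by
      rw [nhdsWithin_Ioc_eq_nhdsGT hxy]; infer_instance
    have htend' : Tendsto (slope ψ x) (𝓝[Ioc x y] x) (𝓝 d) :=
      htend.mono_left (nhdsWithin_mono x hsub)
    have hbd : ∀ᶠ z in 𝓝[Ioc x y] x, slope ψ x z ≤ slope ψ x y := by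
      filter_upwards [eventually_mem_nhdsWithin] with z hz
      exact hmono (hsub hz) ⟨hy, fun hmem => (ne_of_gt hxy) (Set.mem_singleton_iff.1 hmem)⟩ hz.2
    have hd_le : d ≤ slope ψ x y := le_of_tendsto htend' hbd
    have : d * (y - x) ≤ slope ψ x y * (y - x) :=
      mul_le_mul_of_nonneg_right hd_le (by linarith)
    rw [slope_def_field, div_mul_cancel₀ _ (by linarith : y - x ≠ 0)] at this
    linarith
  · simp
  · have hsub : Ico y x ⊆ S \ {x} := fun z hz =>
      ⟨hS.ordConnected.out hy hx ⟨hz.1, hz.2.le⟩,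
        fun hmem => (ne_of_lt hz.2) (Set.mem_singleton_iff.1 hmem)⟩
    have hne : (𝓝[Ico y x] x).NeBot := by
      rw [nhdsWithin_Ico_eq_nhdsLT hyx]; infer_instance
    have htend' : Tendsto (slope ψ x) (𝓝[Ico y x] x) (𝓝 d) :=
      htend.mono_left (nhdsWithin_mono x hsub)
    have hbd : ∀ᶠ z in 𝓝[Ico y x] x, slope ψ x y ≤ slope ψ x z := by
      filter_upwards [eventually_mem_nhdsWithin] with z hz
      exact hmono ⟨hy, fun hmem => (ne_of_lt hyx) (Set.mem_singleton_iff.1 hmem)⟩ (hsub hz) hz.1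
    have hd_ge : slope ψ x y ≤ d := ge_of_tendsto htend' hbd
    have : slope ψ x y * (y - x) ≥ d * (y - x) :=
      mul_le_mul_of_nonpos_right hd_ge (by linarith)
    rw [slope_def_field, div_mul_cancel₀ _ (by intro h; linarith [sub_eq_zero.1 h] : y - x ≠ 0)]
      at this
    linarith

lemma conjE_deriv {φ : ℝ → ℝ≥0∞} {φ' : ℝ → ℝ}
    (hsub : ∀ y, φ y ≠ ⊤ → ∀ z, φ z ≠ ⊤ →
      (φ y).toReal + φ' y * (z - y) ≤ (φ z).toReal)
    {x : ℝ} (hx : φ x ≠ ⊤) :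
    conjE φ (φ' x) = ((φ' x * x - (φ x).toReal : ℝ) : EReal) := by
  apply le_antisymm
  · apply iSup_le
    intro y
    rcases eq_or_ne (φ y) ⊤ with hy | hy
    · simp [hy]
    · rw [ennE hy, ← EReal.coe_sub, EReal.coe_le_coe_iff]
      have := hsub x hx y hy
      nlinarith [this]
  · have := le_iSup (fun y => ((φ' x * y : ℝ) : EReal) - ((φ y : ℝ≥0∞) : EReal)) x
    rwa [ennE hx, ← EReal.coe_sub] at this

lemma jordan_parts (P : Measure X) [IsProbabilityMeasure P] (Q : SignedMeasure X)
    (hac : Q ≪ᵥ P.toENNRealVectorMeasure) :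
    Q.toJordanDecomposition.posPart
        = P.withDensity (fun x => ENNReal.ofReal (Q.rnDeriv P x)) ∧
      Q.toJordanDecomposition.negPart
        = P.withDensity (fun x => ENNReal.ofReal (-Q.rnDeriv P x)) := by
  have hadd : Q = 0 + P.withDensityᵥ (Q.rnDeriv P) := by
    rw [zero_add, MeasureTheory.SignedMeasure.withDensityᵥ_rnDeriv_eq Q P hac]
  have h := MeasureTheory.SignedMeasure.toJordanDecomposition_eq_of_eq_add_withDensity
    (SignedMeasure.measurable_rnDeriv Q P) (SignedMeasure.integrable_rnDeriv Q P)
    (MeasureTheory.VectorMeasure.MutuallySingular.zero_left) hadd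
  constructor
  · rw [h]
    simp [MeasureTheory.SignedMeasure.toJordanDecomposition_zero,
      MeasureTheory.JordanDecomposition.zero_posPart]
  · rw [h]
    simp [MeasureTheory.SignedMeasure.toJordanDecomposition_zero,
      MeasureTheory.JordanDecomposition.zero_negPart]

lemma sint_eq (P : Measure X) [IsProbabilityMeasure P] (Q : SignedMeasure X)
    (hac : Q ≪ᵥ P.toENNRealVectorMeasure) {f : X → ℝ} (hf : Measurable f)
    (hfi : Integrable f Q.totalVariation) :
    Integrable (fun x => f x * Q.rnDeriv P x) P ∧
      sint Q f = ∫ x, f x * Q.rnDeriv P x ∂P := by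
  set q := Q.rnDeriv P with hq_def
  have hq : Measurable q := SignedMeasure.measurable_rnDeriv Q P
  obtain ⟨hp, hn⟩ := jordan_parts P Q hac
  have htv : Q.totalVariation = Q.toJordanDecomposition.posPart +
      Q.toJordanDecomposition.negPart := rfl
  rw [htv, integrable_add_measure] at hfi
  obtain ⟨hfp, hfn⟩ := hfi
  have hps : (fun x => ENNReal.ofReal (q x)) = fun x => ((q x).toNNReal : ℝ≥0∞) := rfl
  have hns : (fun x => ENNReal.ofReal (-q x)) = fun x => ((-q x).toNNReal : ℝ≥0∞) := rfl
  rw [hp, hps] at hfp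
  rw [hn, hns] at hfn
  have hip : Integrable (fun x => (q x).toNNReal • f x) P :=
    (integrable_withDensity_iff_integrable_smul (hq.real_toNNReal)).1 hfp
  have hin : Integrable (fun x => (-q x).toNNReal • f x) P :=
    (integrable_withDensity_iff_integrable_smul (hq.neg.real_toNNReal)).1 hfn
  have hsplit : (fun x => f x * q x) =
      fun x => (q x).toNNReal • f x - (-q x).toNNReal • f x := by
    funext x
    simp only [NNReal.smul_def, Real.coe_toNNReal', smul_eq_mul]
    rcases le_total 0 (q x) with h | h
    · rw [max_eq_left h, max_eq_right (by linarith)]; ring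
    · rw [max_eq_right h, max_eq_left (by linarith)]; ring
  have hint : Integrable (fun x => f x * q x) P := by
    rw [hsplit]; exact hip.sub hin
  refine ⟨hint, ?_⟩
  rw [sint, hp, hn, hps, hns,
    integral_withDensity_eq_integral_smul (hq.real_toNNReal) f,
    integral_withDensity_eq_integral_smul (f := fun x => (-q x).toNNReal) (hq.neg.real_toNNReal) f,
    ← integral_sub hip hin]
  congr 1
  exact hsplit.symm ▸ rfl

/-- eint of an a.e.-real function equals the Bochner integral. -/
lemma eint_of_ae_coe (P : Measure X) [IsProbabilityMeasure P] {g : X → EReal} {u : X → ℝ}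
    (hu : Integrable u P) (hcoe : ∀ᵐ x ∂P, g x = ((u x : ℝ) : EReal)) :
    eint P g = ((∫ x, u x ∂P : ℝ) : EReal) := by
  have hA : (∫⁻ x, etoE (g x) ∂P) = ∫⁻ x, ENNReal.ofReal (u x) ∂P :=
    lintegral_congr_ae (hcoe.mono fun x hx => by simp only []; rw [hx, etoE_coe])
  have hB : (∫⁻ x, etoE (-(g x)) ∂P) = ∫⁻ x, ENNReal.ofReal (-(u x)) ∂P :=
    lintegral_congr_ae (hcoe.mono fun x hx => by simp only []; rw [hx, ← EReal.coe_neg, etoE_coe])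
  have hAfin : (∫⁻ x, ENNReal.ofReal (u x) ∂P) ≠ ⊤ := by
    refine (lt_of_le_of_lt (lintegral_mono fun x => ?_) hu.2).ne
    rw [← ofReal_norm, Real.norm_eq_abs]
    exact ENNReal.ofReal_le_ofReal (le_abs_self _)
  have hBfin : (∫⁻ x, ENNReal.ofReal (-(u x)) ∂P) ≠ ⊤ := by
    refine (lt_of_le_of_lt (lintegral_mono fun x => ?_) hu.2).ne
    rw [← ofReal_norm, Real.norm_eq_abs]
    exact ENNReal.ofReal_le_ofReal (neg_le_abs _)
  rw [eint, hA, hB, ennE hAfin, ennE hBfin, ← EReal.coe_sub, EReal.coe_eq_coe_iff,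
    integral_eq_lintegral_pos_part_sub_lintegral_neg_part hu]

/-- (Dual representation / one-point attainment.)  Let `φ` be proper closed
convex with `φ 1 = 0`, differentiable on its domain, and `Q ≪ P` with `φ(Q,P) < ∞` and
`∫ |φ'(q)| d|Q| < ∞`, where `q = dQ/dP`.  Then with `f̄ = φ'(q)` one has
`∫ f̄ dQ − ∫ φ*(f̄) dP = φ(Q,P)`; for every measurable `f` with `∫ |f| d|Q| < ∞` one has
`∫ f dQ − ∫ φ*(f) dP ≤ φ(Q,P)`; hence `φ(Q,P)` equals the supremum of these quantities,
attained at `f̄`. -/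
theorem stmt18 (P : Measure X) [IsProbabilityMeasure P]
    (φ : ℝ → ℝ≥0∞) (φ' : ℝ → ℝ) (hφ'm : Measurable φ')
    (hconv : ConvexOn ℝ≥0 Set.univ φ)
    (hlsc : LowerSemicontinuous φ)
    (hone : φ 1 = 0)
    (hderiv : ∀ x ∈ {y : ℝ | φ y ≠ ⊤},
      HasDerivWithinAt (fun y => (φ y).toReal) (φ' x) {y : ℝ | φ y ≠ ⊤} x)
    (Q : SignedMeasure X) (hac : Q ≪ᵥ P.toENNRealVectorMeasure)
    (hfin : div φ Q P ≠ ⊤)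
    (hint : Integrable (fun x => φ' (Q.rnDeriv P x)) Q.totalVariation) :
    ((sint Q (fun x => φ' (Q.rnDeriv P x)) : ℝ) : EReal) -
        eint P (fun x => conjE φ (φ' (Q.rnDeriv P x))) = ((div φ Q P : ℝ≥0∞) : EReal) ∧
    (∀ f : X → ℝ, Measurable f → Integrable f Q.totalVariation →
      ((sint Q f : ℝ) : EReal) - eint P (fun x => conjE φ (f x)) ≤
        ((div φ Q P : ℝ≥0∞) : EReal)) ∧
    ((div φ Q P : ℝ≥0∞) : EReal) =
      ⨆ f : {f : X → ℝ // Measurable f ∧ Integrable f Q.totalVariation},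
        (((sint Q f.1 : ℝ) : EReal) - eint P (fun x => conjE φ (f.1 x))) := by
  set q := Q.rnDeriv P with hq_def
  have hq : Measurable q := SignedMeasure.measurable_rnDeriv Q P
  have hφm : Measurable φ := hlsc.measurable
  have hfin' : (∫⁻ x, φ (q x) ∂P) ≠ ⊤ := hfin
  have hae : ∀ᵐ x ∂P, φ (q x) ≠ ⊤ :=
    (ae_lt_top (hφm.comp hq) hfin').mono fun x h => h.ne
  set d : X → ℝ := fun x => (φ (q x)).toReal with hd_def
  have hd_int : Integrable d P :=
    integrable_toReal_of_lintegral_ne_top (hφm.comp hq).aemeasurable hfin'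
  have hint_d : ∫ x, d x ∂P = (div φ Q P).toReal := by
    rw [div]; exact integral_toReal (hφm.comp hq).aemeasurable (ae_lt_top (hφm.comp hq) hfin')
  have hdiv : ((div φ Q P : ℝ≥0∞) : EReal) = ((∫ x, d x ∂P : ℝ) : EReal) := by
    rw [ennE hfin, hint_d]
  have hsub : ∀ y, φ y ≠ ⊤ → ∀ z, φ z ≠ ⊤ →
      (φ y).toReal + φ' y * (z - y) ≤ (φ z).toReal :=
    fun y hy z hz => subgrad_of_hasDerivWithinAt (convexS hconv) (convex_toReal hconv)
      hy (hderiv y hy) hz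
  -- Part 2: the general upper bound
  have part2 : ∀ f : X → ℝ, Measurable f → Integrable f Q.totalVariation →
      ((sint Q f : ℝ) : EReal) - eint P (fun x => conjE φ (f x)) ≤
        ((div φ Q P : ℝ≥0∞) : EReal) := by
    intro f hf hfi
    obtain ⟨hF_int, hsint⟩ := sint_eq P Q hac hf hfi
    rw [← hq_def] at hF_int hsint
    set F : X → ℝ := fun x => f x * q x with hF_def
    have hFm : Measurable F := hf.mul hq
    set g : X → EReal := fun x => conjE φ (f x) with hg_def
    have hglb : ∀ᵐ x ∂P, ((F x - d x : ℝ) : EReal) ≤ g x := by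
      filter_upwards [hae] with x hx
      have := conjE_ge φ (f x) (q x)
      rwa [ennE hx, ← EReal.coe_sub] at this
    have hBfin : (∫⁻ x, etoE (-(g x)) ∂P) ≠ ⊤ := by
      have hb : ∀ᵐ x ∂P, etoE (-(g x)) ≤ ENNReal.ofReal |F x| + φ (q x) := by
        filter_upwards [hglb, hae] with x hx1 hx2
        have h1 : -(g x) ≤ ((d x - F x : ℝ) : EReal) := by
          rw [show ((d x - F x : ℝ) : EReal) = -((F x - d x : ℝ) : EReal) by
            rw [← EReal.coe_neg]; norm_num]
          exact EReal.neg_le_neg_iff.2 hx1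
        calc etoE (-(g x)) ≤ etoE ((d x - F x : ℝ) : EReal) := etoE_mono h1
          _ = ENNReal.ofReal (d x - F x) := etoE_coe _
          _ ≤ ENNReal.ofReal (|F x| + d x) :=
              ENNReal.ofReal_le_ofReal (by have := neg_abs_le (F x); linarith)
          _ ≤ ENNReal.ofReal |F x| + ENNReal.ofReal (d x) := ENNReal.ofReal_add_le
          _ = ENNReal.ofReal |F x| + φ (q x) := by rw [ENNReal.ofReal_toReal hx2]
      refine (lt_of_le_of_lt (lintegral_mono_ae hb) ?_).ne
      rw [lintegral_add_left hFm.abs.ennreal_ofReal]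
      refine ENNReal.add_lt_top.2 ⟨?_, lt_top_iff_ne_top.2 hfin'⟩
      refine lt_of_le_of_lt (lintegral_mono fun x => ?_) hF_int.2
      rw [← ofReal_norm, Real.norm_eq_abs]
    by_cases hA : (∫⁻ x, etoE (g x) ∂P) = ⊤
    · have heq : eint P g = ⊤ := by
        rw [eint, hA, ennE hBfin, EReal.coe_ennreal_top, EReal.top_sub_coe]
      rw [heq, EReal.sub_top]
      exact bot_le
    · have haetop : ∀ᵐ x ∂P, g x ≠ ⊤ := by
        have := ae_lt_top (measurable_etoE.comp ((measurable_conjE φ).comp hf)) hA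
        filter_upwards [this] with x hx
        intro h
        have hx' : etoE (g x) < ⊤ := hx
        rw [h] at hx'
        simp [etoE] at hx'
      set r : X → ℝ := fun x => (g x).toReal with hr_def
      have hgbot : ∀ x, g x ≠ ⊥ := fun x => conjE_ne_bot φ hone (f x)
      have hcoe : ∀ᵐ x ∂P, g x = ((r x : ℝ) : EReal) :=
        haetop.mono fun x hx => (EReal.coe_toReal hx (hgbot x)).symm
      have hr_meas : Measurable r := measurable_ereal_toReal.comp ((measurable_conjE φ).comp hf)
      have hA' : (∫⁻ x, ENNReal.ofReal (r x) ∂P) = ∫⁻ x, etoE (g x) ∂P :=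
        lintegral_congr_ae (hcoe.mono fun x hx => by simp only []; rw [hx, etoE_coe])
      have hB' : (∫⁻ x, ENNReal.ofReal (-(r x)) ∂P) = ∫⁻ x, etoE (-(g x)) ∂P :=
        lintegral_congr_ae (hcoe.mono fun x hx => by
          simp only []; rw [hx, ← EReal.coe_neg, etoE_coe])
      have hr_int : Integrable r P := by
        refine ⟨hr_meas.aestronglyMeasurable, ?_⟩
        have hnorm : ∀ x, (‖r x‖₊ : ℝ≥0∞) = ENNReal.ofReal (r x) + ENNReal.ofReal (-(r x)) := by
          intro x
          rw [← ENNReal.ofReal_coe_nnreal, coe_nnnorm, Real.norm_eq_abs]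
          rcases le_total 0 (r x) with h | h
          · rw [abs_of_nonneg h, ENNReal.ofReal_eq_zero.2 (by linarith : -(r x) ≤ 0), add_zero]
          · rw [abs_of_nonpos h, ENNReal.ofReal_eq_zero.2 h, zero_add]
        have : HasFiniteIntegral r P := by
          show (∫⁻ x, (‖r x‖₊ : ℝ≥0∞) ∂P) < ⊤
          simp_rw [hnorm]
          rw [lintegral_add_left hr_meas.ennreal_ofReal]
          exact ENNReal.add_lt_top.2 ⟨lt_top_iff_ne_top.2 (hA' ▸ hA),
            lt_top_iff_ne_top.2 (hB' ▸ hBfin)⟩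
        exact this
      have heint : eint P g = ((∫ x, r x ∂P : ℝ) : EReal) := eint_of_ae_coe P hr_int hcoe
      have hptw : ∀ᵐ x ∂P, F x - r x ≤ d x := by
        filter_upwards [hglb, hcoe] with x h1 h2
        rw [h2, EReal.coe_le_coe_iff] at h1
        linarith
      have hmono : ∫ x, (F x - r x) ∂P ≤ ∫ x, d x ∂P :=
        integral_mono_ae (hF_int.sub hr_int) hd_int hptw
      rw [integral_sub hF_int hr_int] at hmono
      rw [heint, hsint, hdiv, ← EReal.coe_sub, EReal.coe_le_coe_iff]
      linarith
  -- Part 1: equality at f̄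
  have part1 : ((sint Q (fun x => φ' (q x)) : ℝ) : EReal) -
      eint P (fun x => conjE φ (φ' (q x))) = ((div φ Q P : ℝ≥0∞) : EReal) := by
    obtain ⟨hF_int, hsint⟩ := sint_eq P Q hac (f := fun x => φ' (q x)) (hφ'm.comp hq) hint
    rw [← hq_def] at hF_int hsint
    have hu_int : Integrable (fun x => φ' (q x) * q x - d x) P := hF_int.sub hd_int
    have hcoe : ∀ᵐ x ∂P, conjE φ (φ' (q x)) = ((φ' (q x) * q x - d x : ℝ) : EReal) :=
      hae.mono fun x hx => conjE_deriv hsub hx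
    have heint : eint P (fun x => conjE φ (φ' (q x))) =
        ((∫ x, (φ' (q x) * q x - d x) ∂P : ℝ) : EReal) :=
      eint_of_ae_coe P hu_int hcoe
    rw [hsint, heint, hdiv, ← EReal.coe_sub, EReal.coe_eq_coe_iff,
      integral_sub hF_int hd_int]
    ring
  refine ⟨part1, part2, ?_⟩
  apply le_antisymm
  · exact le_iSup_of_le ⟨fun x => φ' (q x), hφ'm.comp hq, hint⟩ (le_of_eq part1.symm)
  · exact iSup_le fun f => part2 f.1 f.2.1 f.2.2
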